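/- Let R be a regular ring of prime characteristic p, L an ideal, u ∈ R, and set M^{(e)} = (L^[p^e] : u^{ν_e}) where ν_e = 1+p+...+p^{e−1}. Then M^{(e+1)} = ((M^{(e)})^[p] : u) for all e ≥ 0. -/
import Mathlib


/-- The `q`-th Frobenius power of an ideal: the ideal generated by `q`-th powers of its
elements. -/
def fpow {R : Type*} [CommRing R] (q : ℕ) (J : Ideal R) : Ideal R :=
  Ideal.span ((fun a => a ^ q) '' (J : Set R))

/-- `ν_e = 1 + p + ... + p^{e-1}`. -/
def nu (p e : ℕ) : ℕ := ∑ i ∈ Finset.range e, p ^ i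

lemma colon_colon_singleton {R : Type*} [CommRing R] (I : Ideal R) (a b : R) :
    (I.colon (Ideal.span {a})).colon (Ideal.span {b}) = I.colon (Ideal.span {a * b}) := by
  ext x
  simp only [Ideal.mem_colon_span_singleton]
  rw [mul_comm a b, ← mul_assoc]

lemma fpow_eq_map {R : Type*} [CommRing R] (p : ℕ) [hf : Fact p.Prime] [CharP R p] (e : ℕ)
    (J : Ideal R) : fpow (p ^ e) J = J.map (iterateFrobenius R p e) := by
  have : ((fun a => a ^ p ^ e) '' (J : Set R)) = (iterateFrobenius R p e) '' (J : Set R) := by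
    ext x; simp [iterateFrobenius_def]
  rw [fpow, this, Ideal.map]

lemma fpow_fpow {R : Type*} [CommRing R] (p : ℕ) [hf : Fact p.Prime] [CharP R p] (e : ℕ)
    (J : Ideal R) : fpow p (fpow (p ^ e) J) = fpow (p ^ (e + 1)) J := by
  have h1 : fpow p (fpow (p ^ e) J) = fpow (p ^ 1) (fpow (p ^ e) J) := by rw [pow_one]
  rw [h1, fpow_eq_map, fpow_eq_map, fpow_eq_map, Ideal.map_map]
  congr 1
  ext x
  simp [iterateFrobenius_def, frobenius_def, ← pow_mul, ← pow_succ]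

theorem stmt_5 {R : Type*} [CommRing R] (p : ℕ) (hp : p.Prime) [CharP R p]
    (u : R) (L : Ideal R)
    (hreg : ∀ (e : ℕ) (A : Ideal R) (v : R),
      (fpow (p ^ e) A).colon (Ideal.span {v ^ p ^ e}) = fpow (p ^ e) (A.colon (Ideal.span {v}))) :
    ∀ e : ℕ,
      (fpow (p ^ (e + 1)) L).colon (Ideal.span {u ^ nu p (e + 1)}) =
        (fpow p ((fpow (p ^ e) L).colon (Ideal.span {u ^ nu p e}))).colon (Ideal.span {u}) := by
  haveI : Fact p.Prime := ⟨hp⟩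
  intro e
  have hnu : u ^ nu p (e + 1) = (u ^ nu p e) ^ p * u := by
    rw [← pow_mul, ← pow_succ]
    congr 1
    simp [nu, geom_sum_succ, mul_comm]
  have h1 := hreg 1 (fpow (p ^ e) L) (u ^ nu p e)
  rw [pow_one] at h1
  rw [hnu, ← colon_colon_singleton, ← fpow_fpow, h1]
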